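/- arXiv:0904.0273 — 2 statements merged into one kernel-verified Lean document; each statement's English description precedes it below -/
import Mathlib

section
/- Let X be a compact complex four-fold with trivial canonical bundle and suppose X̃ → X is an unramified degree d cover where X̃ is the product of two K3 surfaces. Then d = 1 or d = 2. -/
/-- An abstract interface for compact complex manifolds, recording the
dimensions `h^k(M, O_M)` of the cohomology of the structure sheaf, the
dimensions `h⁰(M, Ω^k_M)` of the spaces of holomorphic `k`-forms, and the
relation `Cover Y X d` meaning that there is an unramified (holomorphic)
covering map `Y → X` of degree `d`. -/
structure ComplexManifoldTheory where
  Mfd : Type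
  /-- complex dimension -/
  dim : Mfd → ℕ
  /-- `h M k = dim_ℂ H^k(M, O_M)` -/
  h : Mfd → ℕ → ℕ
  /-- `hForm M k = dim_ℂ H⁰(M, Ω^k_M)` -/
  hForm : Mfd → ℕ → ℕ
  /-- `Cover Y X d` : there is an unramified degree `d` covering `Y → X` -/
  Cover : Mfd → Mfd → ℕ → Prop
  h_top : ∀ M k, dim M < k → h M k = 0
  /-- Hodge theory: `h^k(O_M) = h⁰(Ω^k_M)` -/
  hodge : ∀ M k, h M k = hForm M k
  cover_dim : ∀ {Y X : Mfd} {d : ℕ}, Cover Y X d → dim Y = dim X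
  /-- holomorphic forms pull back injectively along an unramified covering -/
  cover_hForm : ∀ {Y X : Mfd} {d : ℕ}, Cover Y X d → ∀ k, hForm X k ≤ hForm Y k
  /-- multiplicativity of the holomorphic Euler characteristic (equivalently,
  of the Todd genus) under finite unramified covers -/
  cover_chi : ∀ {Y X : Mfd} {d : ℕ}, Cover Y X d →
    (∑ k ∈ Finset.range (dim Y + 1), (-1 : ℤ) ^ k * h Y k)
      = d * ∑ k ∈ Finset.range (dim X + 1), (-1 : ℤ) ^ k * h X k

/-- The holomorphic Euler characteristic `χ(O_M) = Σ (-1)^k h^k(M, O_M)`. -/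
def ComplexManifoldTheory.chi (T : ComplexManifoldTheory) (M : T.Mfd) : ℤ :=
  ∑ k ∈ Finset.range (T.dim M + 1), (-1 : ℤ) ^ k * T.h M k

/-- Let `X` be a compact complex four-fold with trivial canonical bundle
(so `h⁰(O_X) = 1` and `h⁴(O_X) = h⁰(K_X) = 1`), and suppose `Y → X` is an
unramified degree `d` cover where `Y` is the product of two K3 surfaces
(so `h^•(O_Y) = (1, 0, 2, 0, 1)`).  Then `d = 1` or `d = 2`. -/
theorem cover_of_K3_product_degree (T : ComplexManifoldTheory)
    (Y X : T.Mfd) (d : ℕ) (hd : 0 < d) (hcov : T.Cover Y X d)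
    (hdimX : T.dim X = 4)
    (hY0 : T.h Y 0 = 1) (hY1 : T.h Y 1 = 0) (hY2 : T.h Y 2 = 2)
    (hY3 : T.h Y 3 = 0) (hY4 : T.h Y 4 = 1)
    (hX0 : T.h X 0 = 1) (hX4 : T.h X 4 = 1) :
    d = 1 ∨ d = 2 := by
  have hdimY : T.dim Y = 4 := (T.cover_dim hcov).trans hdimX
  have hle : ∀ k, T.h X k ≤ T.h Y k := fun k => by
    rw [T.hodge X k, T.hodge Y k]; exact T.cover_hForm hcov k
  have h1 : T.h X 1 = 0 := Nat.le_zero.mp (hY1 ▸ hle 1)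
  have h3 : T.h X 3 = 0 := Nat.le_zero.mp (hY3 ▸ hle 3)
  have h2 : T.h X 2 ≤ 2 := le_trans (hle 2) (le_of_eq hY2)
  have hchi := T.cover_chi hcov
  rw [hdimY, hdimX] at hchi
  simp [Finset.sum_range_succ, hY0, hY1, hY2, hY3, hY4, hX0, h1, h3, hX4] at hchi
  -- hchi : 4 = d * (2 + h X 2)
  interval_cases h : T.h X 2 <;> omega
end

section
/- Let E_3 = C/⟨1, τ_3⟩ and E_4 = C/⟨1, τ_4⟩ be elliptic curves, and define maps on E_3 × E_4 by γ_1.(z_3,z_4) = (z_3 + 1/2, -z_4 + 1/4), γ_2.(z_3,z_4) = (z_3 + 1/2, -z_4 + 3/4), γ_3.(z_3,z_4) = (z_3 + τ_3/2, -z_4). Then every non-trivial element of the group generated by γ_1, γ_2, γ_3 acts without fixed points on E_3 × E_4, and γ_1γ_3 is the translation by (1/2 + τ_3/2, 1/4), of order four. -/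
section aux
variable {A B : Type*} [AddCommGroup A] [AddCommGroup B]

lemma prodCongr_mul (e₁ f₁ : Equiv.Perm A) (e₂ f₂ : Equiv.Perm B) :
    (e₁.prodCongr e₂) * (f₁.prodCongr f₂) = (e₁ * f₁).prodCongr (e₂ * f₂) := rfl

lemma prodCongr_inv (e₁ : Equiv.Perm A) (e₂ : Equiv.Perm B) :
    (e₁.prodCongr e₂)⁻¹ = e₁⁻¹.prodCongr e₂⁻¹ := rfl

lemma addLeft_mul (a b : A) : (Equiv.addLeft a) * (Equiv.addLeft b) = Equiv.addLeft (a + b) := by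
  ext x; simp [add_assoc]

lemma addLeft_inv (a : A) : (Equiv.addLeft a)⁻¹ = Equiv.addLeft (-a) := by
  ext x; simp

lemma N_mul_N (a b : A) :
    ((Equiv.neg A).trans (Equiv.addLeft a)) * ((Equiv.neg A).trans (Equiv.addLeft b))
      = Equiv.addLeft (a - b) := by
  ext x; simp [Equiv.Perm.mul_apply]; abel

lemma N_mul_neg (a : A) :
    ((Equiv.neg A).trans (Equiv.addLeft a)) * (Equiv.neg A) = Equiv.addLeft a := by
  ext x; simp [Equiv.Perm.mul_apply]

lemma addLeft_mul_N (a b : A) :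
    (Equiv.addLeft a) * ((Equiv.neg A).trans (Equiv.addLeft b))
      = (Equiv.neg A).trans (Equiv.addLeft (a + b)) := by
  ext x; simp [Equiv.Perm.mul_apply, add_assoc]

lemma N_mul_addLeft (a b : A) :
    ((Equiv.neg A).trans (Equiv.addLeft a)) * (Equiv.addLeft b)
      = (Equiv.neg A).trans (Equiv.addLeft (a - b)) := by
  ext x; simp [Equiv.Perm.mul_apply]; abel

lemma N_inv (a : A) :
    ((Equiv.neg A).trans (Equiv.addLeft a))⁻¹ = (Equiv.neg A).trans (Equiv.addLeft a) := by
  rw [eq_comm, eq_inv_iff_mul_eq_one, N_mul_N, sub_self]; ext x; simp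

lemma one_eq_prodCongr : (1 : Equiv.Perm (A × B)) = (Equiv.addLeft (0:A)).prodCongr (Equiv.addLeft (0:B)) := by
  ext x <;> simp

end aux

lemma half_lattice_not_mem (τ : ℂ) (hτ : τ.im ≠ 0) (k l : ℤ) (h : Odd (k + l)) :
    ((k : ℂ)/2 + l * τ/2) ∉ AddSubgroup.closure ({1, τ} : Set ℂ) := by
  intro hm
  rw [AddSubgroup.mem_closure_pair] at hm
  obtain ⟨m, n, hmn⟩ := hm
  have him : (n : ℝ) * τ.im = l * τ.im / 2 := by
    have := congrArg Complex.im hmn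
    simpa using this
  have hre : (m : ℝ) + n * τ.re = k / 2 + l * τ.re / 2 := by
    have := congrArg Complex.re hmn
    simpa using this
  have hl : l = 2 * n := by
    have h' : ((l : ℝ) - 2 * n) * τ.im = 0 := by ring_nf; linarith [him]
    rcases mul_eq_zero.1 h' with h' | h'
    · have : (l : ℝ) = 2 * n := by linarith
      exact_mod_cast this
    · exact absurd h' hτ
  have hk : k = 2 * m := by
    have : (k : ℝ) = 2 * m := by
      rw [hl] at hre; push_cast at hre; linarith
    exact_mod_cast this
  rw [hk, hl] at h
  exact (Int.not_even_iff_odd.2 h) (Int.even_add.2 (by simp [Int.even_mul]))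

/-- Let `E₃ = ℂ/⟨1, τ₃⟩` and `E₄ = ℂ/⟨1, τ₄⟩` be elliptic curves and define
holomorphic automorphisms of `E₃ × E₄` by
`γ₁ : (z₃, z₄) ↦ (z₃ + 1/2, -z₄ + 1/4)`,
`γ₂ : (z₃, z₄) ↦ (z₃ + 1/2, -z₄ + 3/4)`,
`γ₃ : (z₃, z₄) ↦ (z₃ + τ₃/2, -z₄)`.
Then every non-trivial element of the group generated by `γ₁, γ₂, γ₃` acts
without fixed points on `E₃ × E₄`, and `γ₁γ₃` is the translation by
`(1/2 + τ₃/2, 1/4)`, of order four. -/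
theorem free_dihedral_action_on_abelian_surface
    (τ₃ τ₄ : ℂ) (hτ₃ : τ₃.im ≠ 0) (hτ₄ : τ₄.im ≠ 0) :
    let Λ₃ : AddSubgroup ℂ := AddSubgroup.closure {1, τ₃}
    let Λ₄ : AddSubgroup ℂ := AddSubgroup.closure {1, τ₄}
    let E₃ := ℂ ⧸ Λ₃
    let E₄ := ℂ ⧸ Λ₄
    let q₃ : ℂ → E₃ := QuotientAddGroup.mk
    let q₄ : ℂ → E₄ := QuotientAddGroup.mk
    let γ₁ : Equiv.Perm (E₃ × E₄) :=
      (Equiv.addLeft (q₃ (1/2))).prodCongr ((Equiv.neg E₄).trans (Equiv.addLeft (q₄ (1/4))))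
    let γ₂ : Equiv.Perm (E₃ × E₄) :=
      (Equiv.addLeft (q₃ (1/2))).prodCongr ((Equiv.neg E₄).trans (Equiv.addLeft (q₄ (3/4))))
    let γ₃ : Equiv.Perm (E₃ × E₄) :=
      (Equiv.addLeft (q₃ (τ₃/2))).prodCongr (Equiv.neg E₄)
    (∀ g ∈ Subgroup.closure {γ₁, γ₂, γ₃}, g ≠ 1 → ∀ p : E₃ × E₄, g p ≠ p) ∧
      γ₁ * γ₃ =
        (Equiv.addLeft (q₃ (1/2 + τ₃/2))).prodCongr (Equiv.addLeft (q₄ (1/4))) ∧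
      orderOf (γ₁ * γ₃) = 4 := by
  intro Λ₃ Λ₄ E₃ E₄ q₃ q₄ γ₁ γ₂ γ₃
  have hq3add : ∀ a b : ℂ, q₃ (a + b) = q₃ a + q₃ b := fun a b => rfl
  have hq4add : ∀ a b : ℂ, q₄ (a + b) = q₄ a + q₄ b := fun a b => rfl
  have hq3zero : ∀ x : ℂ, q₃ x = 0 ↔ x ∈ Λ₃ := fun x => QuotientAddGroup.eq_zero_iff x
  have hq4zero : ∀ x : ℂ, q₄ x = 0 ↔ x ∈ Λ₄ := fun x => QuotientAddGroup.eq_zero_iff x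
  set T : ℤ → ℤ → E₃ := fun k l => q₃ ((k:ℂ)/2 + l * τ₃/2) with hT
  have hTadd : ∀ k₁ l₁ k₂ l₂ : ℤ, T k₁ l₁ + T k₂ l₂ = T (k₁+k₂) (l₁+l₂) := by
    intro k₁ l₁ k₂ l₂
    show q₃ _ + q₃ _ = q₃ _
    rw [← hq3add]; congr 1; push_cast; ring
  have hT00 : T 0 0 = 0 := by
    show q₃ _ = 0
    rw [hq3zero]
    have : ((0:ℤ):ℂ)/2 + (0:ℤ) * τ₃/2 = 0 := by norm_num
    rw [this]; exact zero_mem Λ₃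
  have hTneg : ∀ k l : ℤ, -(T k l) = T (-k) (-l) := by
    intro k l
    have h := hTadd k l (-k) (-l)
    simp only [add_neg_cancel] at h
    rw [hT00] at h
    exact neg_eq_of_add_eq_zero_right h
  have hTne : ∀ k l : ℤ, Odd (k + l) → T k l ≠ 0 := by
    intro k l hkl h0
    rw [show (T k l = 0) = (q₃ ((k:ℂ)/2 + l * τ₃/2) = 0) from rfl, hq3zero] at h0
    exact half_lattice_not_mem τ₃ hτ₃ k l hkl h0
  -- the structural invariant
  have key : ∀ g ∈ Subgroup.closure {γ₁, γ₂, γ₃}, ∃ k l : ℤ, ∃ b : E₄,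
      (Even (k+l) ∧ g = (Equiv.addLeft (T k l)).prodCongr (Equiv.addLeft b)) ∨
      (Odd (k+l) ∧ g = (Equiv.addLeft (T k l)).prodCongr
        ((Equiv.neg E₄).trans (Equiv.addLeft b))) := by
    intro g hg
    induction hg using Subgroup.closure_induction with
    | mem x hx =>
      rcases hx with h | h | h
      · refine ⟨1, 0, q₄ (1/4), Or.inr ⟨by decide, ?_⟩⟩
        have e : T 1 0 = q₃ (1/2) := by
          show q₃ _ = q₃ _
          norm_num
        rw [h, e]
      · refine ⟨1, 0, q₄ (3/4), Or.inr ⟨by decide, ?_⟩⟩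
        have e : T 1 0 = q₃ (1/2) := by
          show q₃ _ = q₃ _
          norm_num
        rw [h, e]
      · refine ⟨0, 1, 0, Or.inr ⟨by decide, ?_⟩⟩
        have e : T 0 1 = q₃ (τ₃/2) := by
          show q₃ _ = q₃ _
          norm_num
        have e2 : (Equiv.neg E₄).trans (Equiv.addLeft (0:E₄)) = Equiv.neg E₄ := by
          ext x; simp
        rw [h, e, e2]
    | one =>
      exact ⟨0, 0, 0, Or.inl ⟨by decide, by rw [hT00]; exact one_eq_prodCongr⟩⟩
    | mul x y hx hy ihx ihy =>
      obtain ⟨k₁, l₁, b₁, hx'⟩ := ihx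
      obtain ⟨k₂, l₂, b₂, hy'⟩ := ihy
      refine ⟨k₁ + k₂, l₁ + l₂, ?_⟩
      have hpar : (k₁ + k₂) + (l₁ + l₂) = (k₁ + l₁) + (k₂ + l₂) := by ring
      rcases hx' with ⟨he₁, rfl⟩ | ⟨ho₁, rfl⟩ <;> rcases hy' with ⟨he₂, rfl⟩ | ⟨ho₂, rfl⟩
      · exact ⟨b₁ + b₂, Or.inl ⟨by rw [hpar]; exact he₁.add he₂,
          by rw [prodCongr_mul, addLeft_mul, addLeft_mul, hTadd]⟩⟩
      · exact ⟨b₁ + b₂, Or.inr ⟨by rw [hpar]; exact he₁.add_odd ho₂,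
          by rw [prodCongr_mul, addLeft_mul, addLeft_mul_N, hTadd]⟩⟩
      · exact ⟨b₁ - b₂, Or.inr ⟨by rw [hpar]; exact ho₁.add_even he₂,
          by rw [prodCongr_mul, addLeft_mul, N_mul_addLeft, hTadd]⟩⟩
      · exact ⟨b₁ - b₂, Or.inl ⟨by rw [hpar]; exact ho₁.add_odd ho₂,
          by rw [prodCongr_mul, addLeft_mul, N_mul_N, hTadd]⟩⟩
    | inv x hx ih =>
      obtain ⟨k, l, b, h⟩ := ih
      refine ⟨-k, -l, ?_⟩
      have hpar : (-k) + (-l) = -(k + l) := by ring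
      rcases h with ⟨he, rfl⟩ | ⟨ho, rfl⟩
      · exact ⟨-b, Or.inl ⟨by rw [hpar]; exact he.neg,
          by rw [prodCongr_inv, addLeft_inv, addLeft_inv, hTneg]⟩⟩
      · exact ⟨b, Or.inr ⟨by rw [hpar]; exact ho.neg,
          by rw [prodCongr_inv, addLeft_inv, N_inv, hTneg]⟩⟩
  refine ⟨?_, ?_, ?_⟩
  · -- fixed point freeness
    intro g hg hne p hp
    obtain ⟨k, l, b, h⟩ := key g hg
    rcases h with ⟨he, rfl⟩ | ⟨ho, rfl⟩
    · have h1 : T k l + p.1 = p.1 := congrArg Prod.fst hp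
      have h2 : b + p.2 = p.2 := congrArg Prod.snd hp
      have h1' : T k l = 0 := by
        have := congrArg (fun z => z - p.1) h1
        simpa using this
      have h2' : b = 0 := by
        have := congrArg (fun z => z - p.2) h2
        simpa using this
      exact hne (by rw [h1', h2']; exact one_eq_prodCongr.symm)
    · have h1 : T k l + p.1 = p.1 := congrArg Prod.fst hp
      have h1' : T k l = 0 := by
        have := congrArg (fun z => z - p.1) h1
        simpa using this
      exact hTne k l ho h1'
  · -- product formula
    show (Equiv.addLeft (q₃ (1/2))).prodCongr ((Equiv.neg E₄).trans (Equiv.addLeft (q₄ (1/4))))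
        * (Equiv.addLeft (q₃ (τ₃/2))).prodCongr (Equiv.neg E₄) = _
    rw [prodCongr_mul, addLeft_mul, N_mul_neg, ← hq3add]
  · -- order
    have hmul : γ₁ * γ₃ =
        (Equiv.addLeft (q₃ (1/2 + τ₃/2))).prodCongr (Equiv.addLeft (q₄ (1/4))) := by
      show (Equiv.addLeft (q₃ (1/2))).prodCongr ((Equiv.neg E₄).trans (Equiv.addLeft (q₄ (1/4))))
          * (Equiv.addLeft (q₃ (τ₃/2))).prodCongr (Equiv.neg E₄) = _
      rw [prodCongr_mul, addLeft_mul, N_mul_neg, ← hq3add]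
    have hsq : ∀ (x : E₃) (y : E₄),
        ((Equiv.addLeft x).prodCongr (Equiv.addLeft y))^2
          = (Equiv.addLeft (x+x)).prodCongr (Equiv.addLeft (y+y)) := by
      intro x y; rw [sq, prodCongr_mul, addLeft_mul, addLeft_mul]
    have h2 : (γ₁ * γ₃)^2 = (Equiv.addLeft (q₃ (1 + τ₃))).prodCongr (Equiv.addLeft (q₄ (1/2))) := by
      rw [hmul, hsq, ← hq3add, ← hq4add,
        show (1/2 + τ₃/2 + (1/2 + τ₃/2) : ℂ) = 1 + τ₃ from by ring,
        show ((1:ℂ)/4 + 1/4 : ℂ) = 1/2 from by norm_num]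
    have h4 : (γ₁ * γ₃)^(2^(1+1)) = 1 := by
      have : (γ₁ * γ₃)^(2^(1+1)) = ((γ₁ * γ₃)^2)^2 := by rw [← pow_mul]; norm_num
      rw [this, h2, hsq, ← hq3add, ← hq4add]
      have e3 : q₃ ((1 + τ₃) + (1 + τ₃)) = 0 := by
        rw [hq3zero]
        rw [AddSubgroup.mem_closure_pair]
        exact ⟨2, 2, by simp [zsmul_eq_mul]; ring⟩
      have e4 : q₄ ((1:ℂ)/2 + 1/2) = 0 := by
        rw [hq4zero]
        rw [AddSubgroup.mem_closure_pair]
        exact ⟨1, 0, by simp [zsmul_eq_mul]; norm_num⟩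
      rw [e3, e4]
      exact one_eq_prodCongr.symm
    have h2ne : ¬ (γ₁ * γ₃)^(2^1) = 1 := by
      intro hcon
      rw [pow_one, h2] at hcon
      have happ := congrArg (fun e : Equiv.Perm (E₃ × E₄) => e ((0:E₃), (0:E₄))) hcon
      have : q₄ ((1:ℂ)/2) + (0:E₄) = (0:E₄) := congrArg Prod.snd happ
      rw [add_zero, hq4zero] at this
      have h12 : ((1:ℤ):ℂ)/2 + (0:ℤ) * τ₄/2 = 1/2 := by norm_num
      exact half_lattice_not_mem τ₄ hτ₄ 1 0 (by decide) (h12 ▸ this)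
    have := orderOf_eq_prime_pow h2ne h4
    simpa using this
end
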